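/- Let (x_k, θ_k) be generated by the joint subgradient scheme. Then for all y ∈ X and all k ≥ 0: ‖x_{k+1} − y‖² ≤ ‖x_k − y‖² − 2γ_{f,k}(f(x_k,θ*) − f(y,θ*)) + 4 L_{f,θ} γ_{f,k} ‖θ_k − θ*‖ + γ_{f,k}² M². -/

import Mathlib

open Filter Topology RealInnerProductSpace

lemma proj_inner_le_zero {E : Type*} [NormedAddCommGroup E] [InnerProductSpace ℝ E]
    {K : Set E} (hK : Convex ℝ K) (P : E → E)
    (hP : ∀ y, P y ∈ K ∧ ∀ z ∈ K, ‖y - P y‖ ≤ ‖y - z‖)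
    (v : E) {z : E} (hz : z ∈ K) : ⟪v - P v, z - P v⟫ ≤ 0 := by
  have hPv : P v ∈ K := (hP v).1
  haveI : Nonempty K := ⟨⟨P v, hPv⟩⟩
  have heq : ‖v - P v‖ = ⨅ w : K, ‖v - w‖ := by
    refine le_antisymm (le_ciInf fun w => (hP v).2 w w.2)
      (ciInf_le (f := fun w : K => ‖v - w‖) ⟨0, fun _ ⟨_, h⟩ => h ▸ norm_nonneg _⟩ ⟨P v, hPv⟩)
  exact (norm_eq_iInf_iff_real_inner_le_zero hK hPv).mp heq z hz

lemma proj_contract {E : Type*} [NormedAddCommGroup E] [InnerProductSpace ℝ E]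
    {K : Set E} (hK : Convex ℝ K) (P : E → E)
    (hP : ∀ y, P y ∈ K ∧ ∀ z ∈ K, ‖y - P y‖ ≤ ‖y - z‖)
    (v : E) {z : E} (hz : z ∈ K) : ‖P v - z‖ ^ 2 ≤ ‖v - z‖ ^ 2 := by
  have h := proj_inner_le_zero hK P hP v hz
  have key : ‖v - z‖ ^ 2 = ‖v - P v‖ ^ 2 + 2 * ⟪v - P v, P v - z⟫ + ‖P v - z‖ ^ 2 := by
    have : v - z = (v - P v) + (P v - z) := by abel
    rw [this, @norm_add_sq_real]
  have h2 : 0 ≤ ⟪v - P v, P v - z⟫ := by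
    have : ⟪v - P v, P v - z⟫ = - ⟪v - P v, z - P v⟫ := by
      rw [← inner_neg_right]; congr 1; abel
    linarith [this ▸ neg_nonneg.mpr h]
  nlinarith [sq_nonneg ‖v - P v‖]

/-- Basic inequality for the joint subgradient scheme: for all `y ∈ X` and all `k`,
`‖x_{k+1} − y‖² ≤ ‖x_k − y‖² − 2γ_{f,k}(f(x_k,θ*) − f(y,θ*)) + 4L_{f,θ}γ_{f,k}‖θ_k − θ*‖
  + γ_{f,k}² M²`. -/
theorem stmt_8
    {n m : ℕ}
    (X : Set (EuclideanSpace ℝ (Fin n))) (Θ : Set (EuclideanSpace ℝ (Fin m)))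
    (hXne : X.Nonempty) (hXcl : IsClosed X) (hXcv : Convex ℝ X)
    (hΘne : Θ.Nonempty) (hΘcl : IsClosed Θ) (hΘcv : Convex ℝ Θ)
    (f : EuclideanSpace ℝ (Fin n) → EuclideanSpace ℝ (Fin m) → ℝ)
    (g : EuclideanSpace ℝ (Fin m) → ℝ)
    (gradg : EuclideanSpace ℝ (Fin m) → EuclideanSpace ℝ (Fin m))
    -- convexity of f in x and Lipschitz continuity of f in θ
    (hfconv : ∀ θ' ∈ Θ, ConvexOn ℝ Set.univ (fun y => f y θ'))
    (Lfθ : ℝ)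
    (hLipf : ∀ y ∈ X, ∀ θ1 ∈ Θ, ∀ θ2 ∈ Θ, |f y θ1 - f y θ2| ≤ Lfθ * ‖θ1 - θ2‖)
    -- continuous differentiability and strong convexity of g, with minimizer θ*
    (hgdiff : ∀ ϑ, HasGradientAt g (gradg ϑ) ϑ)
    (hggradcont : Continuous gradg)
    (ηg : ℝ) (hηg : 0 < ηg) (hstrg : StrongConvexOn Θ ηg g)
    (θs : EuclideanSpace ℝ (Fin m)) (hθsΘ : θs ∈ Θ) (hθsmin : ∀ ϑ ∈ Θ, g θs ≤ g ϑ)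
    -- Euclidean projections onto X and Θ
    (PX : EuclideanSpace ℝ (Fin n) → EuclideanSpace ℝ (Fin n))
    (PΘ : EuclideanSpace ℝ (Fin m) → EuclideanSpace ℝ (Fin m))
    (hPX : ∀ y, PX y ∈ X ∧ ∀ z ∈ X, ‖y - PX y‖ ≤ ‖y - z‖)
    (hPΘ : ∀ y, PΘ y ∈ Θ ∧ ∀ z ∈ Θ, ‖y - PΘ y‖ ≤ ‖y - z‖)
    -- steplengths
    (γf γg : ℕ → ℝ) (hγf : ∀ k, 0 < γf k) (hγg : ∀ k, 0 < γg k)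
    -- the joint subgradient scheme
    (x : ℕ → EuclideanSpace ℝ (Fin n)) (θ : ℕ → EuclideanSpace ℝ (Fin m))
    (d : ℕ → EuclideanSpace ℝ (Fin n))
    (hx0 : x 0 ∈ X) (hθ0 : θ 0 ∈ Θ)
    (hsub : ∀ k, ∀ y, f (x k) (θ k) + ⟪d k, y - x k⟫ ≤ f y (θ k))
    (M : ℝ) (hM : ∀ k, ‖d k‖ ≤ M)
    (hxit : ∀ k, x (k + 1) = PX (x k - γf k • d k))
    (hθit : ∀ k, θ (k + 1) = PΘ (θ k - γg k • gradg (θ k))) :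
    ∀ y ∈ X, ∀ k : ℕ,
      ‖x (k + 1) - y‖ ^ 2 ≤
        ‖x k - y‖ ^ 2 - 2 * γf k * (f (x k) θs - f y θs) +
          4 * Lfθ * γf k * ‖θ k - θs‖ + (γf k) ^ 2 * M ^ 2 := by
  intro y hy k
  have hxX : ∀ j, x j ∈ X := by
    intro j
    induction j with
    | zero => exact hx0
    | succ j ih => rw [hxit j]; exact (hPX _).1
  have hθΘ : ∀ j, θ j ∈ Θ := by
    intro j
    induction j with
    | zero => exact hθ0
    | succ j ih => rw [hθit j]; exact (hPΘ _).1
  -- projection step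
  have h1 : ‖x (k + 1) - y‖ ^ 2 ≤ ‖x k - γf k • d k - y‖ ^ 2 := by
    rw [hxit k]; exact proj_contract hXcv PX hPX _ hy
  -- expand the square
  have h2 : ‖x k - γf k • d k - y‖ ^ 2 =
      ‖x k - y‖ ^ 2 - 2 * γf k * ⟪d k, x k - y⟫ + γf k ^ 2 * ‖d k‖ ^ 2 := by
    have : x k - γf k • d k - y = (x k - y) - γf k • d k := by abel
    rw [this, @norm_sub_sq_real, real_inner_smul_right, norm_smul, Real.norm_eq_abs,
      abs_of_pos (hγf k), real_inner_comm]
    ring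
  -- subgradient inequality
  have h3 : f (x k) (θ k) - f y (θ k) ≤ ⟪d k, x k - y⟫ := by
    have := hsub k y
    have hinner : ⟪d k, y - x k⟫ = - ⟪d k, x k - y⟫ := by
      rw [← inner_neg_right]; congr 1; abel
    linarith [hinner ▸ this]
  -- Lipschitz swap of θ k for θs
  have hL1 := hLipf (x k) (hxX k) θs hθsΘ (θ k) (hθΘ k)
  have hL2 := hLipf y hy (θ k) (hθΘ k) θs hθsΘ
  have hns : ‖θs - θ k‖ = ‖θ k - θs‖ := by rw [norm_sub_rev]
  rw [hns] at hL1
  have habs1 := abs_le.mp hL1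
  have habs2 := abs_le.mp hL2
  have h4 : f (x k) θs - f y θs - 2 * Lfθ * ‖θ k - θs‖ ≤ ⟪d k, x k - y⟫ := by
    have := habs1.1; have := habs2.1
    linarith [h3]
  -- bound ‖d k‖
  have hd : γf k ^ 2 * ‖d k‖ ^ 2 ≤ γf k ^ 2 * M ^ 2 := by
    have hdk := hM k
    have : ‖d k‖ ^ 2 ≤ M ^ 2 := by nlinarith [norm_nonneg (d k)]
    nlinarith [sq_nonneg (γf k)]
  have hγpos := (hγf k).le
  calc ‖x (k + 1) - y‖ ^ 2 ≤ ‖x k - γf k • d k - y‖ ^ 2 := h1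
    _ = ‖x k - y‖ ^ 2 - 2 * γf k * ⟪d k, x k - y⟫ + γf k ^ 2 * ‖d k‖ ^ 2 := h2
    _ ≤ ‖x k - y‖ ^ 2 - 2 * γf k * (f (x k) θs - f y θs) +
          4 * Lfθ * γf k * ‖θ k - θs‖ + (γf k) ^ 2 * M ^ 2 := by nlinarith [h4, hd]
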